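/- arXiv:1703.08796 — 2 statements merged into one kernel-verified Lean document; each statement's English description precedes it below -/
import Mathlib

section
/- Nonnegativity of the Allen-Cahn quadratic form: for all ζ ∈ H¹(ℝ), ∫_ℝ (ζ')² - (1 - 3w²(x)) ζ² dx ≥ 0, with equality if and only if ζ is a scalar multiple of w', where w(x) = tanh(x/√2). -/
open Real MeasureTheory Filter Set Topology

noncomputable section ACaux

namespace ACaux

def W (x : ℝ) : ℝ := Real.tanh (x / Real.sqrt 2)

lemma s_pos : (0:ℝ) < Real.sqrt 2 := Real.sqrt_pos.mpr (by norm_num)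
lemma s_ne : (Real.sqrt 2) ≠ 0 := ne_of_gt s_pos
lemma s_sq : (Real.sqrt 2) ^ 2 = 2 := Real.sq_sqrt (by norm_num)

lemma hasDerivAt_tanh (y : ℝ) :
    HasDerivAt Real.tanh (1 - Real.tanh y ^ 2) y := by
  have h := (Real.hasDerivAt_sinh y).div (Real.hasDerivAt_cosh y)
    (ne_of_gt (Real.cosh_pos y))
  have hfun : (fun z => Real.sinh z / Real.cosh z) = Real.tanh :=
    funext fun z => (Real.tanh_eq_sinh_div_cosh z).symm
  rw [show (Real.sinh / Real.cosh) = Real.tanh from hfun] at h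
  refine h.congr_deriv ?_
  rw [Real.tanh_eq_sinh_div_cosh]
  have hc := ne_of_gt (Real.cosh_pos y)
  field_simp

lemma hasDerivAt_W (x : ℝ) :
    HasDerivAt W ((1 - W x ^ 2) / Real.sqrt 2) x := by
  have h := (hasDerivAt_tanh (x / Real.sqrt 2)).comp x
    ((hasDerivAt_id x).div_const (Real.sqrt 2))
  refine h.congr_deriv ?_
  simp [W, div_eq_mul_inv, mul_comm]

lemma deriv_W (x : ℝ) : deriv W x = (1 - W x ^ 2) / Real.sqrt 2 :=
  (hasDerivAt_W x).deriv

lemma W_sq_le (x : ℝ) : W x ^ 2 ≤ 1 := by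
  have hc := Real.cosh_pos (x / Real.sqrt 2)
  rw [W, Real.tanh_eq_sinh_div_cosh, div_pow]
  rw [div_le_one (by positivity)]
  nlinarith [Real.cosh_sq_sub_sinh_sq (x / Real.sqrt 2)]

lemma continuous_W : Continuous W := by
  have : Continuous Real.tanh := by
    have hfun : (fun z => Real.sinh z / Real.cosh z) = Real.tanh :=
      funext fun z => (Real.tanh_eq_sinh_div_cosh z).symm
    rw [← hfun]
    exact Real.continuous_sinh.div Real.continuous_cosh
      (fun y => ne_of_gt (Real.cosh_pos y))
  exact this.comp (continuous_id.div_const _)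

lemma limit_zero_atTop {h : ℝ → ℝ} (hi : Integrable h) {m : ℝ}
    (hl : Tendsto h atTop (𝓝 m)) : m = 0 := by
  by_contra hm
  have habs : Tendsto (fun x => |h x|) atTop (𝓝 |m|) := hl.abs
  have h2 : ∀ᶠ x in atTop, |m| / 2 ≤ |h x| :=
    habs.eventually (eventually_ge_nhds (by have := abs_pos.mpr hm; linarith))
  obtain ⟨A, hA⟩ := h2.exists_forall_of_atTop
  have hconst : IntegrableOn (fun _ : ℝ => |m| / 2) (Ici A) := by
    refine Integrable.mono' hi.abs.integrableOn aestronglyMeasurable_const ?_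
    filter_upwards [ae_restrict_mem measurableSet_Ici] with x hx
    simpa [abs_of_nonneg (by positivity : (0:ℝ) ≤ |m|/2)] using hA x hx
  rw [integrableOn_const_iff] at hconst
  rcases hconst with hc | hc
  · rw [enorm_eq_zero] at hc
    have : |m| = 0 := by linarith [abs_nonneg m]
    exact hm (abs_eq_zero.mp this)
  · simp [Real.volume_Ici] at hc

lemma limit_zero_atBot {h : ℝ → ℝ} (hi : Integrable h) {m : ℝ}
    (hl : Tendsto h atBot (𝓝 m)) : m = 0 := by
  have hi' : Integrable (fun x => h (-x)) := by
    have := hi.comp_neg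
    simpa using this
  have hl' : Tendsto (fun x => h (-x)) atTop (𝓝 m) :=
    hl.comp tendsto_neg_atTop_atBot
  exact limit_zero_atTop hi' hl'

lemma integral_deriv_zero {h D : ℝ → ℝ} (hd : ∀ x, HasDerivAt h (D x) x)
    (hD : Integrable D) (hh : Integrable h) : (∫ x : ℝ, D x) = 0 := by
  have h1 : ∀ x : ℝ, (∫ t in (0:ℝ)..x, D t) = h x - h 0 := fun x =>
    intervalIntegral.integral_eq_sub_of_hasDerivAt (fun t _ => hd t)
      hD.intervalIntegrable
  have hT : Tendsto h atTop (𝓝 (h 0 + ∫ t in Ioi (0:ℝ), D t)) := by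
    have h2 := intervalIntegral_tendsto_integral_Ioi (0:ℝ) hD.integrableOn tendsto_id
    have h3 : Tendsto (fun x : ℝ => h 0 + ∫ t in (0:ℝ)..x, D t) atTop
        (𝓝 (h 0 + ∫ t in Ioi (0:ℝ), D t)) := tendsto_const_nhds.add h2
    exact h3.congr (fun x => by rw [h1 x]; ring)
  have hB : Tendsto h atBot (𝓝 (h 0 - ∫ t in Iic (0:ℝ), D t)) := by
    have h2 := intervalIntegral_tendsto_integral_Iic (0:ℝ) hD.integrableOn tendsto_id
    have h3 : Tendsto (fun x : ℝ => h 0 - ∫ t in (x:ℝ)..0, D t) atBot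
        (𝓝 (h 0 - ∫ t in Iic (0:ℝ), D t)) := tendsto_const_nhds.sub h2
    refine h3.congr (fun x => ?_)
    rw [intervalIntegral.integral_symm, h1 x]; ring
  have e1 := limit_zero_atTop hh hT
  have e2 := limit_zero_atBot hh hB
  have e3 := intervalIntegral.integral_Iic_add_Ioi (b := (0:ℝ))
    hD.integrableOn hD.integrableOn
  linarith

lemma const_of_deriv_ae_zero {g G : ℝ → ℝ} (hd : ∀ x, HasDerivAt g (G x) x)
    (hG : G =ᵐ[volume] 0) : ∀ x, g x = g 0 := by
  intro x
  have hGi : Integrable G := (integrable_zero ℝ ℝ volume).congr hG.symm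
  have h1 : (∫ t in (0:ℝ)..x, G t) = g x - g 0 :=
    intervalIntegral.integral_eq_sub_of_hasDerivAt (fun t _ => hd t)
      hGi.intervalIntegrable
  have h2 : (∫ t in (0:ℝ)..x, G t) = 0 := by
    have : ∀ᵐ t ∂volume, t ∈ Set.uIoc (0:ℝ) x → G t = 0 := by
      filter_upwards [hG] with t ht _ using ht
    rw [intervalIntegral.integral_congr_ae this, intervalIntegral.integral_zero]
  linarith [h1 ▸ h2]

/-- `R = φ'/φ` where `φ = W'`. -/
def Rf (x : ℝ) : ℝ := -Real.sqrt 2 * W x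

lemma Rf_sq (x : ℝ) : Rf x ^ 2 = 2 * W x ^ 2 := by
  have : Rf x ^ 2 = (Real.sqrt 2) ^ 2 * W x ^ 2 := by rw [Rf]; ring
  rw [this, s_sq]

lemma hasDerivAt_Rf (x : ℝ) : HasDerivAt Rf (W x ^ 2 - 1) x := by
  have h := (hasDerivAt_W x).const_mul (-Real.sqrt 2)
  have : Rf = fun y => -Real.sqrt 2 * W y := rfl
  rw [this]
  refine h.congr_deriv ?_
  field_simp
  ring

lemma continuous_Rf : Continuous Rf := (continuous_const.mul continuous_W)

end ACaux

end ACaux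

open ACaux

theorem allen_cahn_quadratic_form_nonneg
    (w : ℝ → ℝ) (hw : ∀ x, w x = Real.tanh (x / Real.sqrt 2)) :
    ∀ ζ : ℝ → ℝ, Differentiable ℝ ζ →
      Integrable (fun x : ℝ => (ζ x) ^ 2) →
      Integrable (fun x : ℝ => (deriv ζ x) ^ 2) →
      (0 ≤ ∫ x : ℝ, (deriv ζ x) ^ 2 - (1 - 3 * (w x) ^ 2) * (ζ x) ^ 2) ∧
      ((∫ x : ℝ, (deriv ζ x) ^ 2 - (1 - 3 * (w x) ^ 2) * (ζ x) ^ 2) = 0 ↔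
        ∃ c : ℝ, ∀ x : ℝ, ζ x = c * deriv w x) := by
  have hwf : w = ACaux.W := funext hw
  subst hwf
  intro ζ hdiff hζ2 hd2
  have hs2 : (Real.sqrt 2) ^ 2 = 2 := ACaux.s_sq
  have hsne : (Real.sqrt 2) ≠ 0 := ACaux.s_ne
  set Q : ℝ → ℝ := fun x => (deriv ζ x - Rf x * ζ x) ^ 2 with hQdef
  set D : ℝ → ℝ := fun x => (W x ^ 2 - 1) * ζ x ^ 2
      + 2 * Rf x * (ζ x * deriv ζ x) with hDdef
  -- measurability helpers
  have hζc : Continuous ζ := hdiff.continuous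
  have hζ'm : Measurable (deriv ζ) := measurable_deriv ζ
  have hQm : AEStronglyMeasurable Q volume := by
    exact ((hζ'm.sub (continuous_Rf.measurable.mul hζc.measurable)).pow_const 2)
      |>.aestronglyMeasurable
  have hDm : AEStronglyMeasurable D volume := by
    refine Measurable.aestronglyMeasurable ?_
    exact (((continuous_W.measurable.pow_const 2).sub measurable_const).mul
        (hζc.measurable.pow_const 2)).add
      ((continuous_Rf.measurable.const_mul 2).mul (hζc.measurable.mul hζ'm))
  -- integrability
  have hDint : Integrable D := by
    refine Integrable.mono' ((hζ2.const_mul 5).add (hd2.const_mul 4)) hDm ?_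
    refine Eventually.of_forall (fun x => ?_)
    have h1 := ACaux.W_sq_le x
    have h2 := ACaux.Rf_sq x
    have h0 : (0:ℝ) ≤ W x ^ 2 := sq_nonneg _
    simp only [Pi.add_apply, hDdef]
    rw [Real.norm_eq_abs, abs_le]
    constructor <;>
      nlinarith [sq_nonneg (Rf x * ζ x + deriv ζ x), sq_nonneg (Rf x * ζ x - deriv ζ x),
        sq_nonneg (ζ x), sq_nonneg (deriv ζ x)]
  have hQint : Integrable Q := by
    refine Integrable.mono' ((hd2.const_mul 2).add (hζ2.const_mul 4)) hQm ?_
    refine Eventually.of_forall (fun x => ?_)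
    have h1 := ACaux.W_sq_le x
    have h2 := ACaux.Rf_sq x
    simp only [Pi.add_apply, hQdef]
    rw [Real.norm_eq_abs, abs_of_nonneg (sq_nonneg _)]
    nlinarith [sq_nonneg (deriv ζ x + Rf x * ζ x), sq_nonneg (ζ x)]
  have hhint : Integrable (fun x => Rf x * ζ x ^ 2) := by
    refine Integrable.mono' (hζ2.const_mul 2)
      ((continuous_Rf.mul (hζc.pow 2)).aestronglyMeasurable) ?_
    refine Eventually.of_forall (fun x => ?_)
    have h1 := ACaux.W_sq_le x
    have h2 := ACaux.Rf_sq x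
    rw [Real.norm_eq_abs, abs_le]
    constructor <;>
      nlinarith [sq_nonneg (Rf x - 2), sq_nonneg (Rf x + 2), sq_nonneg (ζ x)]
  -- D is the derivative of R ζ²
  have hhd : ∀ x, HasDerivAt (fun y => Rf y * ζ y ^ 2) (D x) x := by
    intro x
    have h := (ACaux.hasDerivAt_Rf x).mul ((hdiff x).hasDerivAt.pow 2)
    refine h.congr_deriv ?_
    simp [hDdef]; ring
  have hDzero : (∫ x : ℝ, D x) = 0 := ACaux.integral_deriv_zero hhd hDint hhint
  -- pointwise identity
  have hident : ∀ x, deriv ζ x ^ 2 - (1 - 3 * W x ^ 2) * ζ x ^ 2 = Q x + D x := by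
    intro x
    have h2 := ACaux.Rf_sq x
    simp only [hQdef, hDdef]
    linear_combination (-(ζ x ^ 2)) * h2
  have key : (∫ x : ℝ, deriv ζ x ^ 2 - (1 - 3 * W x ^ 2) * ζ x ^ 2)
      = ∫ x : ℝ, Q x := by
    have e : (∫ x : ℝ, deriv ζ x ^ 2 - (1 - 3 * W x ^ 2) * ζ x ^ 2)
        = ∫ x : ℝ, (Q x + D x) :=
      integral_congr_ae (Eventually.of_forall (fun x => hident x))
    rw [e, integral_add hQint hDint, hDzero, add_zero]
  constructor
  · rw [key]; exact integral_nonneg (fun x => sq_nonneg _)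
  constructor
  · -- equality → multiple of w'
    intro h0
    have hQ0 : (∫ x : ℝ, Q x) = 0 := by rw [← key]; exact h0
    have hae : Q =ᵐ[volume] 0 :=
      (integral_eq_zero_iff_of_nonneg (fun x => sq_nonneg _) hQint).mp hQ0
    set U : ℝ → ℝ := fun x => Real.cosh (x / Real.sqrt 2) ^ 2 with hUdef
    have hUpos : ∀ x, 0 < U x := fun x => by
      have := Real.cosh_pos (x / Real.sqrt 2); positivity
    have hUd : ∀ x, HasDerivAt U (Real.sqrt 2 * W x * U x) x := by
      intro x
      have hc : HasDerivAt (fun y => Real.cosh (y / Real.sqrt 2))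
          (Real.sinh (x / Real.sqrt 2) * (1 / Real.sqrt 2)) x :=
        by have := (Real.hasDerivAt_cosh (x / Real.sqrt 2)).comp x
             ((hasDerivAt_id x).div_const (Real.sqrt 2)); exact this
      have h := hc.pow 2
      refine h.congr_deriv ?_
      have hW : W x = Real.sinh (x / Real.sqrt 2) / Real.cosh (x / Real.sqrt 2) :=
        Real.tanh_eq_sinh_div_cosh _
      have hcp := ne_of_gt (Real.cosh_pos (x / Real.sqrt 2))
      rw [hUdef, hW]
      field_simp
      linear_combination (-(Real.sinh (x / Real.sqrt 2) * Real.cosh (x / Real.sqrt 2))) * hs2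
    set g : ℝ → ℝ := fun x => ζ x * U x with hgdef
    have hgd : ∀ x, HasDerivAt g (U x * (deriv ζ x - Rf x * ζ x)) x := by
      intro x
      have h := (hdiff x).hasDerivAt.mul (hUd x)
      refine h.congr_deriv ?_
      simp only [Rf]
      ring
    have hGae : (fun x => U x * (deriv ζ x - Rf x * ζ x)) =ᵐ[volume] 0 := by
      filter_upwards [hae] with x hx
      have hx' : (deriv ζ x - Rf x * ζ x) ^ 2 = 0 := hx
      have h2 : deriv ζ x - Rf x * ζ x = 0 := by
        exact pow_eq_zero_iff (two_ne_zero) |>.mp hx'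
      simp [h2]
    have hconst := ACaux.const_of_deriv_ae_zero hgd hGae
    refine ⟨Real.sqrt 2 * g 0, fun x => ?_⟩
    have hgx : ζ x * U x = g 0 := hconst x
    have hsech : 1 - W x ^ 2 = 1 / U x := by
      have hW : W x = Real.sinh (x / Real.sqrt 2) / Real.cosh (x / Real.sqrt 2) :=
        Real.tanh_eq_sinh_div_cosh _
      have hcp := ne_of_gt (Real.cosh_pos (x / Real.sqrt 2))
      rw [hUdef, hW]
      field_simp
      linarith [Real.cosh_sq_sub_sinh_sq (x / Real.sqrt 2)]
    rw [ACaux.deriv_W x, hsech]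
    have hU0 := ne_of_gt (hUpos x)
    field_simp
    linear_combination hgx
  · -- multiple of w' → equality
    rintro ⟨c, hc⟩
    have hφd : ∀ x, HasDerivAt (fun y => (1 - W y ^ 2) / Real.sqrt 2)
        (Rf x * ((1 - W x ^ 2) / Real.sqrt 2)) x := by
      intro x
      have h := (((ACaux.hasDerivAt_W x).pow 2).const_sub 1).div_const (Real.sqrt 2)
      refine h.congr_deriv ?_
      simp only [Rf]
      field_simp
      linear_combination (W x - W x ^ 3) * hs2
    have hζeq : ζ = fun x => c * ((1 - W x ^ 2) / Real.sqrt 2) :=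
      funext fun x => by rw [hc x, ACaux.deriv_W x]
    have hQz : ∀ x, Q x = 0 := by
      intro x
      have hd : HasDerivAt ζ (c * (Rf x * ((1 - W x ^ 2) / Real.sqrt 2))) x := by
        rw [hζeq]; exact (hφd x).const_mul c
      have hdz : deriv ζ x = c * (Rf x * ((1 - W x ^ 2) / Real.sqrt 2)) := hd.deriv
      simp only [hQdef, hdz, hc x, ACaux.deriv_W x]
      ring
    rw [key]
    have : (∫ x : ℝ, Q x) = ∫ _ : ℝ, (0:ℝ) :=
      integral_congr_ae (Eventually.of_forall (fun x => hQz x))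
    rw [this, integral_zero]
end

section
/- Interaction estimate: for s > 0, ∫_ℝ w'(x + s) w'(x) dx ≤ C (1 + s) e^{-√2 s} for a constant C > 0 independent of s, where w(x) = tanh(x/√2). -/
open Real MeasureTheory Set

private lemma tanh_hasDerivAt' (y : ℝ) :
    HasDerivAt Real.tanh (1 / Real.cosh y ^ 2) y := by
  have h : HasDerivAt (fun z => Real.sinh z / Real.cosh z)
      ((Real.cosh y * Real.cosh y - Real.sinh y * Real.sinh y) / Real.cosh y ^ 2) y :=
    (Real.hasDerivAt_sinh y).div (Real.hasDerivAt_cosh y) (ne_of_gt (Real.cosh_pos y))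
  have he : (fun z => Real.sinh z / Real.cosh z) = Real.tanh := by
    funext z; rw [Real.tanh_eq_sinh_div_cosh]
  have hv : (Real.cosh y * Real.cosh y - Real.sinh y * Real.sinh y) / Real.cosh y ^ 2
      = 1 / Real.cosh y ^ 2 := by
    rw [show Real.cosh y * Real.cosh y - Real.sinh y * Real.sinh y
        = Real.cosh y ^ 2 - Real.sinh y ^ 2 by ring, Real.cosh_sq_sub_sinh_sq]
  rw [he, hv] at h
  exact h

private lemma w_hasDerivAt (x : ℝ) :
    HasDerivAt (fun x => Real.tanh (x / Real.sqrt 2))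
      (1 / Real.cosh (x / Real.sqrt 2) ^ 2 * (Real.sqrt 2)⁻¹) x := by
  have h1 : HasDerivAt (fun x : ℝ => x / Real.sqrt 2) ((Real.sqrt 2)⁻¹) x := by
    simpa [one_div] using (hasDerivAt_id x).div_const (Real.sqrt 2)
  exact (tanh_hasDerivAt' (x / Real.sqrt 2)).comp x h1

private lemma w_deriv (x : ℝ) :
    deriv (fun x => Real.tanh (x / Real.sqrt 2)) x
      = 1 / Real.cosh (x / Real.sqrt 2) ^ 2 * (Real.sqrt 2)⁻¹ :=
  (w_hasDerivAt x).deriv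

private lemma w_deriv_pos (x : ℝ) :
    0 < deriv (fun x => Real.tanh (x / Real.sqrt 2)) x := by
  rw [w_deriv]
  have h1 : 0 < Real.cosh (x / Real.sqrt 2) ^ 2 := pow_pos (Real.cosh_pos _) 2
  have h2 : (0:ℝ) < Real.sqrt 2 := Real.sqrt_pos.2 (by norm_num)
  positivity

private lemma w_deriv_bound (x : ℝ) :
    deriv (fun x => Real.tanh (x / Real.sqrt 2)) x
      ≤ 2 * Real.sqrt 2 * Real.exp (-(Real.sqrt 2) * |x|) := by
  have h2 : (0:ℝ) < Real.sqrt 2 := Real.sqrt_pos.2 (by norm_num)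
  have hss : Real.sqrt 2 * Real.sqrt 2 = 2 := Real.mul_self_sqrt (by norm_num)
  rw [w_deriv]
  set y := x / Real.sqrt 2 with hy
  have habs : |y| = |x| / Real.sqrt 2 := by
    rw [hy, abs_div, abs_of_pos h2]
  have hcosh : Real.exp |y| ≤ 2 * Real.cosh y := by
    rw [Real.cosh_eq]
    rcases abs_cases y with ⟨h, _⟩ | ⟨h, _⟩ <;> rw [h] <;>
      nlinarith [Real.exp_pos y, Real.exp_pos (-y)]
  have hcosh2 : Real.exp |y| ^ 2 ≤ (2 * Real.cosh y) ^ 2 := by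
    apply pow_le_pow_left₀ (Real.exp_pos _).le hcosh
  have hcp : 0 < Real.cosh y ^ 2 := pow_pos (Real.cosh_pos _) 2
  have hkey : 1 / Real.cosh y ^ 2 ≤ 4 * Real.exp (-(2 * |y|)) := by
    rw [div_le_iff₀ hcp]
    have : Real.exp (-(2*|y|)) * Real.exp |y| ^ 2 = 1 := by
      rw [← Real.exp_nat_mul, ← Real.exp_add]; norm_num
    nlinarith [Real.exp_pos (-(2*|y|)), hcosh2]
  have h2y : 2 * |y| = Real.sqrt 2 * |x| := by
    rw [habs]
    field_simp
    nlinarith [abs_nonneg x]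
  calc 1 / Real.cosh y ^ 2 * (Real.sqrt 2)⁻¹
      ≤ 4 * Real.exp (-(2 * |y|)) * (Real.sqrt 2)⁻¹ := by
        apply mul_le_mul_of_nonneg_right hkey (by positivity)
    _ = 2 * Real.sqrt 2 * Real.exp (-(Real.sqrt 2) * |x|) := by
        rw [h2y, neg_mul]
        have h4 : (4:ℝ) * (Real.sqrt 2)⁻¹ = 2 * Real.sqrt 2 := by
          field_simp; nlinarith
        ring_nf
        nlinarith [Real.exp_pos (-(Real.sqrt 2 * |x|)), hss]

private lemma prod_bound (s x : ℝ) :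
    deriv (fun x => Real.tanh (x / Real.sqrt 2)) (x + s)
      * deriv (fun x => Real.tanh (x / Real.sqrt 2)) x
      ≤ 8 * Real.exp (-(Real.sqrt 2) * (|x + s| + |x|)) := by
  have hss : Real.sqrt 2 * Real.sqrt 2 = 2 := Real.mul_self_sqrt (by norm_num)
  have h1 := w_deriv_bound (x + s)
  have h2 := w_deriv_bound x
  have hp1 := (w_deriv_pos (x + s)).le
  have hp2 := (w_deriv_pos x).le
  calc deriv (fun x => Real.tanh (x / Real.sqrt 2)) (x + s)
        * deriv (fun x => Real.tanh (x / Real.sqrt 2)) x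
      ≤ (2 * Real.sqrt 2 * Real.exp (-(Real.sqrt 2) * |x + s|))
        * (2 * Real.sqrt 2 * Real.exp (-(Real.sqrt 2) * |x|)) := by
        apply mul_le_mul h1 h2 hp2 (by positivity)
    _ = (2 * Real.sqrt 2 * (2 * Real.sqrt 2))
        * (Real.exp (-(Real.sqrt 2) * |x + s|) * Real.exp (-(Real.sqrt 2) * |x|)) := by ring
    _ = 8 * Real.exp (-(Real.sqrt 2) * (|x + s| + |x|)) := by
        rw [← Real.exp_add]
        congr 1
        · nlinarith
        · congr 1; ring

theorem allen_cahn_overlap_estimate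
    (w : ℝ → ℝ) (hw : ∀ x, w x = Real.tanh (x / Real.sqrt 2)) :
    ∃ C : ℝ, 0 < C ∧
      ∀ s : ℝ, 0 < s →
        (∫ x : ℝ, deriv w (x + s) * deriv w x) ≤
          C * (1 + s) * Real.exp (-(Real.sqrt 2) * s) := by
  have hw' : w = fun x => Real.tanh (x / Real.sqrt 2) := funext hw
  subst hw'
  have h2 : (0:ℝ) < Real.sqrt 2 := Real.sqrt_pos.2 (by norm_num)
  have h21 : (1:ℝ) ≤ 2 * Real.sqrt 2 := by nlinarith [Real.sq_sqrt (by norm_num : (2:ℝ) ≥ 0)]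
  refine ⟨16, by norm_num, fun s hs => ?_⟩
  set E : ℝ := Real.exp (-(Real.sqrt 2) * s) with hE
  have hEpos : 0 < E := Real.exp_pos _
  -- the dominating function
  set g : ℝ → ℝ := fun x =>
    8 * E * ((Icc (-s) 0).indicator (fun _ => (1:ℝ)) x
      + (Ioi (0:ℝ)).indicator (fun x => Real.exp (-x)) x
      + (Iic (-s)).indicator (fun x => Real.exp (x + s)) x) with hg
  -- integrability of the three pieces
  have hint1 : Integrable ((Icc (-s) (0:ℝ)).indicator (fun _ => (1:ℝ))) := by
    apply (integrableOn_const ?_).integrable_indicator measurableSet_Icc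
    rw [Real.volume_Icc]
    exact ENNReal.ofReal_ne_top
  have hint2 : Integrable ((Ioi (0:ℝ)).indicator (fun x => Real.exp (-x))) := by
    have := exp_neg_integrableOn_Ioi 0 (by norm_num : (0:ℝ) < 1)
    simp only [neg_mul, one_mul] at this
    exact this.integrable_indicator measurableSet_Ioi
  have hint3 : Integrable ((Iic (-s)).indicator (fun x => Real.exp (x + s))) := by
    have : IntegrableOn (fun x => Real.exp (x + s)) (Iic (-s)) := by
      simp_rw [Real.exp_add]
      exact (integrableOn_exp_Iic (-s)).mul_const (Real.exp s)
    exact this.integrable_indicator measurableSet_Iic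
  have hgint : Integrable g := by
    rw [hg]
    exact (((hint1.add hint2).add hint3).const_mul (8 * E))
  -- pointwise bound
  have hpt : ∀ x : ℝ, deriv (fun x => Real.tanh (x / Real.sqrt 2)) (x + s)
      * deriv (fun x => Real.tanh (x / Real.sqrt 2)) x ≤ g x := by
    intro x
    refine le_trans (prod_bound s x) ?_
    rw [hg]
    beta_reduce
    rcases lt_or_ge 0 x with hx | hx
    · -- x > 0
      have habs : |x + s| + |x| = s + 2 * x := by
        rw [abs_of_pos (by linarith), abs_of_pos hx]; ring
      rw [habs, indicator_of_notMem (by simp [Set.mem_Icc]; intro _; linarith),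
        indicator_of_mem (mem_Ioi.mpr hx), indicator_of_notMem (by simp [Set.mem_Iic]; linarith)]
      have : Real.exp (-(Real.sqrt 2) * (s + 2 * x)) ≤ E * Real.exp (-x) := by
        rw [hE, ← Real.exp_add]
        apply Real.exp_le_exp.2
        nlinarith
      calc 8 * Real.exp (-(Real.sqrt 2) * (s + 2 * x)) ≤ 8 * (E * Real.exp (-x)) := by linarith
        _ = 8 * E * (0 + Real.exp (-x) + 0) := by ring
    rcases lt_or_ge x (-s) with hx2 | hx2
    · -- x < -s
      have habs : |x + s| + |x| = s + 2 * (-(x + s)) := by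
        rw [abs_of_neg (by linarith), abs_of_neg (by linarith)]; ring
      rw [habs, indicator_of_notMem (by simp [Set.mem_Icc]; intro h; linarith),
        indicator_of_notMem (by simp [Set.mem_Ioi]; linarith),
        indicator_of_mem (mem_Iic.mpr (by linarith))]
      have : Real.exp (-(Real.sqrt 2) * (s + 2 * (-(x + s)))) ≤ E * Real.exp (x + s) := by
        rw [hE, ← Real.exp_add]
        apply Real.exp_le_exp.2
        nlinarith
      calc 8 * Real.exp (-(Real.sqrt 2) * (s + 2 * (-(x + s)))) ≤ 8 * (E * Real.exp (x + s)) := by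
            linarith
        _ = 8 * E * (0 + 0 + Real.exp (x + s)) := by ring
    · -- -s ≤ x ≤ 0
      have habs : |x + s| + |x| = s := by
        rw [abs_of_nonneg (by linarith), abs_of_nonpos hx]; ring
      rw [habs, indicator_of_mem (mem_Icc.mpr ⟨hx2, hx⟩)]
      have hi2 : 0 ≤ (Ioi (0:ℝ)).indicator (fun x => Real.exp (-x)) x :=
        Set.indicator_nonneg (fun y _ => (Real.exp_pos _).le) x
      have hi3 : 0 ≤ (Iic (-s)).indicator (fun x => Real.exp (x + s)) x :=
        Set.indicator_nonneg (fun y _ => (Real.exp_pos _).le) x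
      nlinarith
  -- compare integrals
  have hmono : (∫ x : ℝ, deriv (fun x => Real.tanh (x / Real.sqrt 2)) (x + s)
      * deriv (fun x => Real.tanh (x / Real.sqrt 2)) x) ≤ ∫ x : ℝ, g x := by
    apply integral_mono_of_nonneg
    · exact Filter.Eventually.of_forall fun x =>
        mul_nonneg (w_deriv_pos _).le (w_deriv_pos _).le
    · exact hgint
    · exact Filter.Eventually.of_forall hpt
  -- compute the integral of g
  have hI1 : (∫ x : ℝ, (Icc (-s) (0:ℝ)).indicator (fun _ => (1:ℝ)) x) = s := by
    rw [integral_indicator measurableSet_Icc, setIntegral_const, Real.volume_real_Icc_of_le (by linarith), smul_eq_mul,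
      mul_one]
    ring
  have hI2 : (∫ x : ℝ, (Ioi (0:ℝ)).indicator (fun x => Real.exp (-x)) x) = 1 := by
    rw [integral_indicator measurableSet_Ioi]
    exact integral_exp_neg_Ioi_zero
  have hI3 : (∫ x : ℝ, (Iic (-s)).indicator (fun x => Real.exp (x + s)) x) = 1 := by
    rw [integral_indicator measurableSet_Iic]
    simp_rw [Real.exp_add]
    rw [integral_mul_const, integral_exp_Iic, ← Real.exp_add]
    simp
  have h12 : Integrable (fun x : ℝ => (Icc (-s) (0:ℝ)).indicator (fun _ => (1:ℝ)) x
      + (Ioi (0:ℝ)).indicator (fun x => Real.exp (-x)) x) := hint1.add hint2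
  have hgval : (∫ x : ℝ, g x) = 8 * E * (s + 2) := by
    rw [hg, integral_const_mul, integral_add h12 hint3, integral_add hint1 hint2, hI1, hI2, hI3]
    ring
  calc (∫ x : ℝ, deriv (fun x => Real.tanh (x / Real.sqrt 2)) (x + s)
        * deriv (fun x => Real.tanh (x / Real.sqrt 2)) x)
      ≤ ∫ x : ℝ, g x := hmono
    _ = 8 * E * (s + 2) := hgval
    _ ≤ 16 * (1 + s) * E := by nlinarith
    _ = 16 * (1 + s) * Real.exp (-(Real.sqrt 2) * s) := by rw [hE]
end
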